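/- arXiv:2309.16291 — 2 statements merged into one kernel-verified Lean document; each statement's English description precedes it below -/
import Mathlib

section
/- Let A ≥ 1 and K < A be natural numbers. For every adaptive K-query strategy on A arms, if i* is drawn uniformly at random from Fin A, the probability that the strategy's output when run on f_{i*} differs from i* is at least 1 - (K + 1)/A. -/
open MeasureTheory

/-- The transcript of an adaptive query strategy `q` run against reward
function `f` for a given number of steps:
`t₀ = []`, `t_{j+1} = t_j ++ [f (q t_j)]`. -/
def transcript (A : ℕ) (q : List Bool → Fin A) (f : Fin A → Bool) : ℕ → List Bool
  | 0 => []
  | j + 1 => transcript A q f j ++ [f (q (transcript A q f j))]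

/-- The adaptive `K`-query strategy `(q, G)` succeeds on the arm `i` if its
output when run on the reward function `f_i = fun j => decide (j = i)`
equals `i`. -/
def banditSucceeds (A K : ℕ) (q G : List Bool → Fin A) (i : Fin A) : Prop :=
  G (transcript A q (fun j => decide (j = i)) K) = i

private lemma transcript_eq_zero (A K : ℕ) (q : List Bool → Fin A) (i : Fin A)
    (h : ∀ j < K, q (transcript A q (fun _ => false) j) ≠ i) :
    ∀ j ≤ K, transcript A q (fun j' => decide (j' = i)) j
      = transcript A q (fun _ => false) j := by
  intro j hj
  induction j with
  | zero => rfl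
  | succ j ih =>
    have hj' : j ≤ K := Nat.le_of_succ_le hj
    have ihj := ih hj'
    have hq : q (transcript A q (fun _ => false) j) ≠ i := h j (Nat.lt_of_succ_le hj)
    show transcript A q (fun j' => decide (j' = i)) j
        ++ [decide (q (transcript A q (fun j' => decide (j' = i)) j) = i)]
      = transcript A q (fun _ => false) j ++ [false]
    rw [ihj, decide_eq_false hq]

/-- for `1 ≤ A` and `K < A`, under the uniform distribution on
`Fin A`, the probability that an adaptive `K`-query strategy fails on the
drawn arm is at least `1 - (K + 1) / A`. -/
theorem stmt_1 (A K : ℕ) (hA : 1 ≤ A) (hK : K < A) (q G : List Bool → Fin A) :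
    haveI : Nonempty (Fin A) := ⟨⟨0, hA⟩⟩
    (1 : ENNReal) - ((K : ENNReal) + 1) / (A : ENNReal) ≤
      (PMF.uniformOfFintype (Fin A)).toMeasure
        {i : Fin A | ¬ banditSucceeds A K q G i} := by
  haveI : Nonempty (Fin A) := ⟨⟨0, hA⟩⟩
  classical
  set S : Finset (Fin A) :=
    ((Finset.range K).image fun j => q (transcript A q (fun _ => false) j))
      ∪ {G (transcript A q (fun _ => false) K)} with hS
  have hsub : {i : Fin A | banditSucceeds A K q G i} ⊆ ↑S := by
    intro i hi
    by_contra hiS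
    have hiS' : i ∉ S := hiS
    have hq : ∀ j < K, q (transcript A q (fun _ => false) j) ≠ i := by
      intro j hj he
      exact hiS' (Finset.mem_union_left _
        (Finset.mem_image.mpr ⟨j, Finset.mem_range.mpr hj, he⟩))
    have ht := transcript_eq_zero A K q i hq K le_rfl
    have : G (transcript A q (fun _ => false) K) = i := by
      have hb : banditSucceeds A K q G i := hi
      unfold banditSucceeds at hb
      rw [ht] at hb
      exact hb
    exact hiS' (Finset.mem_union_right _ (by simp [this.symm]))
  have hcard : S.card ≤ K + 1 := by
    calc S.card ≤ ((Finset.range K).image fun j =>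
          q (transcript A q (fun _ => false) j)).card + 1 := by
          exact (Finset.card_union_le _ _).trans (by simp)
      _ ≤ K + 1 := by
          have := Finset.card_image_le (s := Finset.range K)
            (f := fun j => q (transcript A q (fun _ => false) j))
          simpa using Nat.add_le_add_right (le_trans this (by simp)) 1
  have hmeas : (PMF.uniformOfFintype (Fin A)).toMeasure
      {i : Fin A | banditSucceeds A K q G i} ≤ ((K : ENNReal) + 1) / (A : ENNReal) := by
    calc (PMF.uniformOfFintype (Fin A)).toMeasure {i : Fin A | banditSucceeds A K q G i}
        ≤ (PMF.uniformOfFintype (Fin A)).toMeasure ↑S := measure_mono hsub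
      _ = ∑ x ∈ S, PMF.uniformOfFintype (Fin A) x := PMF.toMeasure_apply_finset _ _
      _ = S.card * ((A : ENNReal))⁻¹ := by
          simp [PMF.uniformOfFintype_apply, Finset.sum_const, mul_comm]
      _ ≤ ((K : ENNReal) + 1) * ((A : ENNReal))⁻¹ := by
          apply mul_le_mul_left
          exact_mod_cast (by exact_mod_cast hcard : (S.card : ENNReal) ≤ ((K + 1 : ℕ) : ENNReal))
      _ = ((K : ENNReal) + 1) / (A : ENNReal) := by rw [div_eq_mul_inv]
  have hset : {i : Fin A | ¬ banditSucceeds A K q G i}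
      = {i : Fin A | banditSucceeds A K q G i}ᶜ := rfl
  rw [hset, prob_compl_eq_one_sub (by measurability)]
  exact tsub_le_tsub_left hmeas 1
end

section
/- Let K : ℕ → ℕ satisfy (K A : ℝ)/A → 0 as A → ∞. For each A ≥ 1, let ρ_A be a probability mass function on a type ι_A and for each r ∈ ι_A let an adaptive K(A)-query strategy on A arms be given. Then there exist A ≥ 1 and i* ∈ Fin A such that the ρ_A-probability that the strategy fails to output i* when run on f_{i*} is at least 1/3. -/
lemma trans_eq (A K : ℕ) (q : List Bool → Fin A) (i : Fin A)
    (h : ∀ j < K, q (transcript A q (fun _ => false) j) ≠ i) :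
    transcript A q (fun j => decide (j = i)) K = transcript A q (fun _ => false) K := by
  induction K with
  | zero => rfl
  | succ n ih =>
    have h' : ∀ j < n, q (transcript A q (fun _ => false) j) ≠ i :=
      fun j hj => h j (Nat.lt_succ_of_lt hj)
    rw [transcript, transcript, ih h']
    congr 1
    simp [h n (Nat.lt_succ_self n)]

open Classical in
lemma succ_card (A K : ℕ) (q G : List Bool → Fin A) :
    (Finset.univ.filter (fun i => banditSucceeds A K q G i)).card ≤ K + 1 := by
  classical
  set t := fun j => transcript A q (fun _ => false) j with ht
  have hsub : Finset.univ.filter (fun i => banditSucceeds A K q G i) ⊆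
      insert (G (t K)) ((Finset.range K).image (fun j => q (t j))) := by
    intro i hi
    simp only [Finset.mem_filter] at hi
    by_cases hq : ∃ j < K, q (t j) = i
    · obtain ⟨j, hj, hji⟩ := hq
      exact Finset.mem_insert_of_mem (Finset.mem_image.mpr ⟨j, Finset.mem_range.mpr hj, hji⟩)
    · push_neg at hq
      have heq := trans_eq A K q i hq
      have hG : G (t K) = i := by
        have hs := hi.2
        unfold banditSucceeds at hs
        rw [heq] at hs
        exact hs
      exact Finset.mem_insert.mpr (Or.inl hG.symm)
  calc (Finset.univ.filter (fun i => banditSucceeds A K q G i)).card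
      ≤ (insert (G (t K)) ((Finset.range K).image (fun j => q (t j)))).card :=
        Finset.card_le_card hsub
    _ ≤ ((Finset.range K).image (fun j => q (t j))).card + 1 := Finset.card_insert_le _ _
    _ ≤ K + 1 := by
        have := Finset.card_image_le (s := Finset.range K) (f := fun j => q (t j))
        simpa using Nat.add_le_add_right this 1

/-- Proposition A.6: if `K A / A → 0` and, for each `A ≥ 1`,
a randomized adaptive `K A`-query strategy on `A` arms is given (a PMF `ρ A`
on an index type `ι A` with a deterministic strategy `(q A _ r, G A _ r)` for
each index `r`), then there exist `A ≥ 1` and an arm `i : Fin A` on which the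
randomized strategy fails with probability at least `1/3`. -/
theorem stmt_3 (K : ℕ → ℕ)
    (hK : Filter.Tendsto (fun A : ℕ => (K A : ℝ) / (A : ℝ)) Filter.atTop (nhds 0))
    (ι : ℕ → Type*) (ρ : ∀ A, 1 ≤ A → PMF (ι A))
    (q G : ∀ A, 1 ≤ A → ι A → List Bool → Fin A) :
    ∃ A, ∃ hA : 1 ≤ A, ∃ i : Fin A,
      (1 : ENNReal) / 3 ≤
        (ρ A hA).toOuterMeasure
          {r : ι A | ¬ banditSucceeds A (K A) (q A hA r) (G A hA r) i} := by
  classical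
  -- Find A with 1 ≤ A and 3 * (K A + 1) ≤ A
  have h1 : Filter.Tendsto (fun A : ℕ => ((K A : ℝ) + 1) / (A : ℝ)) Filter.atTop (nhds 0) := by
    have h2 : Filter.Tendsto (fun A : ℕ => (1 : ℝ) / (A : ℝ)) Filter.atTop (nhds 0) :=
      tendsto_one_div_atTop_nhds_zero_nat
    have h3 := hK.add h2
    simp only [add_zero] at h3
    convert h3 using 2 with A
    rw [add_div]
  have hev : ∀ᶠ A in Filter.atTop, ((K A : ℝ) + 1) / (A : ℝ) < 1/3 := by
    have h4 := h1 (Metric.ball_mem_nhds (0:ℝ) (by norm_num : (0:ℝ) < 1/3))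
    filter_upwards [h4] with A hA
    simp only [Set.mem_preimage, Metric.mem_ball, Real.dist_eq, sub_zero] at hA
    exact lt_of_le_of_lt (le_abs_self _) hA
  obtain ⟨N, hN⟩ := Filter.eventually_atTop.mp hev
  set A := max N 1 with hAdef
  have hA : 1 ≤ A := le_max_right _ _
  have hApos : (0:ℝ) < A := by exact_mod_cast hA
  have hlt : ((K A : ℝ) + 1) / (A : ℝ) < 1/3 := hN A (le_max_left _ _)
  have hbound : 3 * (K A + 1) ≤ A := by
    have h5 : (3 * ((K A : ℝ) + 1)) < A := by
      rw [div_lt_iff₀ hApos] at hlt; linarith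
    have h6 : ((3 * (K A + 1) : ℕ) : ℝ) < (A : ℝ) := by push_cast; linarith
    exact_mod_cast h6.le
  -- success probability
  set succP : Fin A → ENNReal :=
    fun i => (ρ A hA).toOuterMeasure {r : ι A | banditSucceeds A (K A) (q A hA r) (G A hA r) i}
    with hsuccP
  -- sum of success probabilities is at most K A + 1
  have hsum : ∑ i : Fin A, succP i ≤ (K A : ENNReal) + 1 := by
    have heq : ∀ i : Fin A, succP i =
        ∑' r : ι A, Set.indicator {r : ι A | banditSucceeds A (K A) (q A hA r) (G A hA r) i}
          (ρ A hA) r := fun i => PMF.toOuterMeasure_apply _ _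
    calc ∑ i : Fin A, succP i
        = ∑' r : ι A, ∑ i : Fin A,
            Set.indicator {r : ι A | banditSucceeds A (K A) (q A hA r) (G A hA r) i}
              (ρ A hA) r := by
          rw [Finset.sum_congr rfl (fun i _ => heq i)]
          exact (Summable.tsum_finsetSum (fun i _ => ENNReal.summable)).symm
      _ ≤ ∑' r : ι A, ((K A : ENNReal) + 1) * (ρ A hA) r := by
          apply ENNReal.tsum_le_tsum
          intro r
          have hcnt : ∑ i : Fin A,
              Set.indicator {r' : ι A | banditSucceeds A (K A) (q A hA r') (G A hA r') i}
                (ρ A hA) r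
              = ((Finset.univ.filter
                  (fun i => banditSucceeds A (K A) (q A hA r) (G A hA r) i)).card : ENNReal)
                * (ρ A hA) r := by
            simp only [Set.indicator_apply, Set.mem_setOf_eq]
            rw [← Finset.sum_filter, Finset.sum_const, nsmul_eq_mul]
          rw [hcnt]
          apply mul_le_mul_left
          have hc := succ_card A (K A) (q A hA r) (G A hA r)
          calc ((Finset.univ.filter
                  (fun i => banditSucceeds A (K A) (q A hA r) (G A hA r) i)).card : ENNReal)
              ≤ ((K A + 1 : ℕ) : ENNReal) := by exact_mod_cast hc
            _ = (K A : ENNReal) + 1 := by push_cast; ring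
      _ = (K A : ENNReal) + 1 := by
          rw [ENNReal.tsum_mul_left, (ρ A hA).tsum_coe, mul_one]
  -- pick a minimizing arm
  obtain ⟨i, -, hmin⟩ := Finset.exists_min_image Finset.univ succP
    ⟨⟨0, hA⟩, Finset.mem_univ _⟩
  have hAmul : (A : ENNReal) * succP i ≤ (K A : ENNReal) + 1 := by
    calc (A : ENNReal) * succP i = A • succP i := by rw [nsmul_eq_mul]
      _ ≤ ∑ i' : Fin A, succP i' := by
          have := Finset.card_nsmul_le_sum Finset.univ succP (succP i)
            (fun j _ => hmin j (Finset.mem_univ j))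
          simpa using this
      _ ≤ (K A : ENNReal) + 1 := hsum
  -- succP i ≤ 2/3
  have hA0 : (A : ENNReal) ≠ 0 := by exact_mod_cast Nat.one_le_iff_ne_zero.mp hA
  have hAtop : (A : ENNReal) ≠ ⊤ := ENNReal.natCast_ne_top A
  have hsucc23 : succP i ≤ 2/3 := by
    rw [ENNReal.le_div_iff_mul_le (Or.inl (by norm_num)) (Or.inl (by norm_num))]
    have h7 : (A : ENNReal) * (succP i * 3) ≤ (A : ENNReal) * 2 := by
      calc (A : ENNReal) * (succP i * 3) = ((A : ENNReal) * succP i) * 3 := by ring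
        _ ≤ ((K A : ENNReal) + 1) * 3 := mul_le_mul_left hAmul 3
        _ = ((3 * (K A + 1) : ℕ) : ENNReal) := by push_cast; ring
        _ ≤ (A : ENNReal) := by exact_mod_cast hbound
        _ ≤ (A : ENNReal) * 2 := by
            nth_rewrite 1 [← mul_one (A : ENNReal)]
            exact mul_le_mul_right (by norm_num) _
    exact (ENNReal.mul_le_mul_iff_right hA0 hAtop).mp h7
  -- failure probability
  refine ⟨A, hA, i, ?_⟩
  set failP : ENNReal :=
    (ρ A hA).toOuterMeasure {r : ι A | ¬ banditSucceeds A (K A) (q A hA r) (G A hA r) i}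
    with hfailP
  have hcompl : succP i + failP = 1 := by
    simp only [hsuccP, hfailP, PMF.toOuterMeasure_apply]
    rw [← ENNReal.tsum_add]
    have hset : {r : ι A | ¬ banditSucceeds A (K A) (q A hA r) (G A hA r) i}
        = {r : ι A | banditSucceeds A (K A) (q A hA r) (G A hA r) i}ᶜ := by
      rw [Set.compl_setOf]
    rw [hset]
    calc ∑' r : ι A,
          (Set.indicator {r' : ι A | banditSucceeds A (K A) (q A hA r') (G A hA r') i}
            (ρ A hA) r
          + Set.indicator {r' : ι A | banditSucceeds A (K A) (q A hA r') (G A hA r') i}ᶜ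
            (ρ A hA) r)
        = ∑' r : ι A, (ρ A hA) r := by
          apply tsum_congr
          intro r
          exact congrFun (Set.indicator_self_add_compl
            {r' : ι A | banditSucceeds A (K A) (q A hA r') (G A hA r') i} (ρ A hA)) r
      _ = 1 := (ρ A hA).tsum_coe
  -- conclude
  have h8 : (1 : ENNReal) = succP i + failP := hcompl.symm
  by_contra hcon
  push_neg at hcon
  have : (1 : ENNReal) < 2/3 + 1/3 := by
    calc (1 : ENNReal) = succP i + failP := h8
      _ ≤ 2/3 + failP := add_le_add_left hsucc23 _
      _ < 2/3 + 1/3 := by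
          exact ENNReal.add_lt_add_left (ENNReal.div_lt_top (by norm_num) (by norm_num)).ne hcon
  have h9 : (2:ENNReal)/3 + 1/3 = 1 := by
    have h10 : (2:ENNReal)+1 = 3 := by norm_num
    rw [ENNReal.div_add_div_same, h10]
    exact ENNReal.div_self (by norm_num) (by norm_num)
  rw [h9] at this
  exact lt_irrefl _ this
end
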